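/- Let E/F be a finite Galois extension of fields whose Galois group is cyclic of prime order p, generated by α. Let G be a group, H a normal subgroup of G, and a ∈ G an element with a^p ∈ H. Let σ : H → GL(d,E) be an absolutely irreducible representation, and suppose A ∈ GL(d,E) satisfies A·σ(h)^α·A⁻¹ = σ(a h a⁻¹) for all h ∈ H. Then A·A^α·A^{α²}···A^{α^{p−1}} = μ·σ(a^p) for some nonzero μ ∈ F. -/

import Mathlib

open Matrix

namespace TwistAux

variable {F E : Type*} [Field F] [Field E] [Algebra F E] {d : ℕ}

/-- Entrywise application of a field automorphism, as a monoid hom on `GL`. -/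
noncomputable def glMap (β : E ≃ₐ[F] E) : GL (Fin d) E →* GL (Fin d) E :=
  Units.map ((AlgEquiv.mapMatrix β :
    Matrix (Fin d) (Fin d) E ≃ₐ[F] Matrix (Fin d) (Fin d) E) :
      Matrix (Fin d) (Fin d) E →* Matrix (Fin d) (Fin d) E)

@[simp] lemma glMap_val (β : E ≃ₐ[F] E) (X : GL (Fin d) E) :
    ((glMap β X : GL (Fin d) E) : Matrix (Fin d) (Fin d) E)
      = (X : Matrix (Fin d) (Fin d) E).map ⇑β := rfl

lemma glMap_glMap (β γ : E ≃ₐ[F] E) (X : GL (Fin d) E) :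
    glMap β (glMap γ X) = glMap (β * γ) X := by
  apply Units.ext
  simp [Matrix.map_map]
  rfl

lemma glMap_one (X : GL (Fin d) E) : glMap (1 : E ≃ₐ[F] E) X = X := by
  apply Units.ext
  simp only [glMap_val]
  ext i j
  rfl

end TwistAux

open TwistAux

/-- (From Section 2, Case 2.) Let the Galois group of `E/F` be cyclic of prime order
`p`, generated by `α`. Let `H ⊴ G`, `a ∈ G` with `a^p ∈ H`, let
`σ : H → GL(d,E)` be absolutely irreducible, and suppose `A ∈ GL(d,E)` satisfies
`A·σ(h)^α·A⁻¹ = σ(a h a⁻¹)` for all `h ∈ H`. Then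
`A·A^α···A^{α^{p−1}} = μ·σ(a^p)` for some nonzero `μ ∈ F`. -/
theorem twisted_intertwiner_norm_is_scalar_in_F
    {F E : Type*} [Field F] [Field E] [Algebra F E]
    [FiniteDimensional F E] [IsGalois F E]
    (p : ℕ) (hp : p.Prime) (α : E ≃ₐ[F] E) (hord : orderOf α = p)
    (hgen : ∀ σ : E ≃ₐ[F] E, σ ∈ Subgroup.zpowers α)
    {G : Type*} [Group G] (H : Subgroup G) (hN : H.Normal)
    (a : G) (ha : a ^ p ∈ H) {d : ℕ}
    (σ : H →* GL (Fin d) E)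
    (hirr : Submodule.span E (Set.range fun h => (σ h : Matrix (Fin d) (Fin d) E)) = ⊤)
    (A : GL (Fin d) E)
    (hA : ∀ (h : G) (hh : h ∈ H),
      (A : Matrix (Fin d) (Fin d) E)
          * ((σ ⟨h, hh⟩ : Matrix (Fin d) (Fin d) E).map ⇑α)
          * ((A⁻¹ : GL (Fin d) E) : Matrix (Fin d) (Fin d) E)
        = (σ ⟨a * h * a⁻¹, hN.conj_mem h hh a⟩ : Matrix (Fin d) (Fin d) E)) :
    ∃ μ : F, μ ≠ 0 ∧
      ((List.range p).map fun i =>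
          (A : Matrix (Fin d) (Fin d) E).map ⇑(α ^ i)).prod
        = algebraMap F E μ • (σ ⟨a ^ p, ha⟩ : Matrix (Fin d) (Fin d) E) := by
  classical
  rcases Nat.eq_zero_or_pos d with hd | hd
  · refine ⟨1, one_ne_zero, ?_⟩
    subst hd
    apply Subsingleton.elim
  -- unit-level intertwining relation
  have hA' : ∀ (h : G) (hh : h ∈ H),
      A * glMap α (σ ⟨h, hh⟩) * A⁻¹ = σ ⟨a * h * a⁻¹, hN.conj_mem h hh a⟩ := by
    intro h hh
    apply Units.ext
    simpa using hA h hh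
  -- the partial products
  set m : ℕ → GL (Fin d) E := fun i => glMap (α ^ i) A with hm
  set Bn : ℕ → GL (Fin d) E := fun n => ((List.range n).map m).prod with hBn
  have hBsucc : ∀ n, Bn (n + 1) = Bn n * m n := by
    intro n
    simp [hBn, List.range_succ]
  -- key induction
  have key : ∀ (n : ℕ) (h : G) (hh : h ∈ H),
      Bn n * glMap (α ^ n) (σ ⟨h, hh⟩) * (Bn n)⁻¹
        = σ ⟨a ^ n * h * (a ^ n)⁻¹, hN.conj_mem h hh (a ^ n)⟩ := by
    intro n
    induction n with
    | zero =>
      intro h hh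
      have : Bn 0 = 1 := by simp [hBn]
      rw [this]
      simp only [pow_zero, glMap_one, one_mul, inv_one, mul_one]
    | succ n ih =>
      intro h hh
      have inner : m n * glMap (α ^ (n + 1)) (σ ⟨h, hh⟩) * (m n)⁻¹
          = glMap (α ^ n) (σ ⟨a * h * a⁻¹, hN.conj_mem h hh a⟩) := by
        have h1 : glMap (α ^ (n + 1)) (σ ⟨h, hh⟩)
            = glMap (α ^ n) (glMap α (σ ⟨h, hh⟩)) := by
          rw [glMap_glMap, ← pow_succ]
        rw [h1, hm]
        have : (glMap (α ^ n) A : GL (Fin d) E)⁻¹ = glMap (α ^ n) A⁻¹ := by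
          rw [← map_inv]
        rw [this, ← _root_.map_mul, ← _root_.map_mul, hA' h hh]
      have hgrp : a ^ n * (a * h * a⁻¹) * (a ^ n)⁻¹
          = a ^ (n + 1) * h * (a ^ (n + 1))⁻¹ := by
        group
      calc Bn (n + 1) * glMap (α ^ (n + 1)) (σ ⟨h, hh⟩) * (Bn (n + 1))⁻¹
          = Bn n * (m n * glMap (α ^ (n + 1)) (σ ⟨h, hh⟩) * (m n)⁻¹) * (Bn n)⁻¹ := by
            rw [hBsucc]; group
        _ = Bn n * glMap (α ^ n) (σ ⟨a * h * a⁻¹, hN.conj_mem h hh a⟩) * (Bn n)⁻¹ := by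
            rw [inner]
        _ = σ ⟨a ^ n * (a * h * a⁻¹) * (a ^ n)⁻¹, _⟩ := ih _ _
        _ = σ ⟨a ^ (n + 1) * h * (a ^ (n + 1))⁻¹, hN.conj_mem h hh (a ^ (n + 1))⟩ := by
            congr 1
            exact Subtype.ext hgrp
  have hαp : α ^ p = 1 := by rw [← hord]; exact pow_orderOf_eq_one α
  set B : GL (Fin d) E := Bn p with hBdef
  set S : GL (Fin d) E := σ ⟨a ^ p, ha⟩ with hSdef
  -- B σ(h) B⁻¹ = S σ(h) S⁻¹
  have hcomm : ∀ h : H, (S⁻¹ * B) * σ h = σ h * (S⁻¹ * B) := by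
    intro h
    have k := key p h.1 h.2
    rw [hαp, glMap_one] at k
    have hsub : (⟨a ^ p * ↑h * (a ^ p)⁻¹, hN.conj_mem h.1 h.2 (a ^ p)⟩ : H)
        = ⟨a ^ p, ha⟩ * h * (⟨a ^ p, ha⟩ : H)⁻¹ := by
      ext; rfl
    rw [hsub, _root_.map_mul, _root_.map_mul, map_inv] at k
    have : B * σ h = S * σ h * S⁻¹ * B := by
      have := congrArg (· * Bn p) k
      simpa [mul_assoc, hBdef, hSdef] using this
    calc S⁻¹ * B * σ h = S⁻¹ * (B * σ h) := by rw [mul_assoc]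
      _ = S⁻¹ * (S * σ h * S⁻¹ * B) := by rw [this]
      _ = σ h * (S⁻¹ * B) := by group
  -- Schur: C := S⁻¹ B is scalar
  set C : Matrix (Fin d) (Fin d) E := ((S⁻¹ * B : GL (Fin d) E) : Matrix (Fin d) (Fin d) E)
    with hCdef
  have hCcomm : ∀ M : Matrix (Fin d) (Fin d) E, Commute M C := by
    intro M
    have hM : M ∈ Submodule.span E (Set.range fun h : H =>
        (σ h : Matrix (Fin d) (Fin d) E)) := by rw [hirr]; trivial
    induction hM using Submodule.span_induction with
    | mem x hx =>
      obtain ⟨h, rfl⟩ := hx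
      have := hcomm h
      have := congrArg (Units.val) this
      simpa [Commute, SemiconjBy, hCdef, mul_comm] using this.symm
    | zero => simp [Commute, SemiconjBy]
    | add x y _ _ hx hy => exact hx.add_left hy
    | smul c x _ hx => exact hx.smul_left c
  obtain ⟨c, hc⟩ : C ∈ Set.range (Matrix.scalar (Fin d)) := by
    rw [Matrix.mem_range_scalar_iff_commute_single']
    intro i j
    exact hCcomm _
  -- B = c • S  (matrix level)
  have hBval : (B : Matrix (Fin d) (Fin d) E)
      = c • (S : Matrix (Fin d) (Fin d) E) := by
    have h1 : (S * (S⁻¹ * B) : GL (Fin d) E) = B := mul_inv_cancel_left S B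
    have h2 := congrArg Units.val h1
    rw [Units.val_mul] at h2
    rw [← h2, ← hCdef, ← hc, Matrix.scalar_apply, ← Matrix.smul_one_eq_diagonal,
      mul_smul_comm, mul_one]
  -- twisted conjugation of B
  have hBtwist : A * glMap α B = B * A := by
    have step : ∀ n, A * glMap α (Bn n) = Bn (n + 1) := by
      intro n
      induction n with
      | zero =>
        have h0 : Bn 0 = 1 := by simp [hBn]
        have h1 : Bn 1 = A := by
          simp [hBn, hm, List.range_succ, glMap_one]
        rw [h0, h1, _root_.map_one, mul_one]
      | succ n ih =>
        have e1 : glMap α (Bn (n + 1)) = glMap α (Bn n) * glMap α (m n) := by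
          rw [hBsucc, _root_.map_mul]
        have e2 : glMap α (m n) = m (n + 1) := by
          show glMap α (glMap (α ^ n) A) = glMap (α ^ (n + 1)) A
          rw [glMap_glMap, ← pow_succ']
        rw [e1, e2, ← mul_assoc, ih, ← hBsucc]
    have h1 := step p
    rw [hBsucc, ← hBdef] at h1
    have h3 : m p = A := by
      show glMap (α ^ p) A = A
      rw [hαp]; exact glMap_one A
    rw [h3] at h1
    exact h1
  -- S is also twisted-fixed
  have hStwist : A * glMap α S = S * A := by
    have := hA' (a ^ p) ha
    have hsub : (⟨a * a ^ p * a⁻¹, hN.conj_mem _ ha a⟩ : H) = ⟨a ^ p, ha⟩ := by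
      ext; group
    rw [hsub] at this
    have := congrArg (· * A) this
    simpa [mul_assoc, hSdef] using this
  -- α fixes c
  have hαc : α c = c := by
    have h1 : (glMap α B : Matrix (Fin d) (Fin d) E)
        = α c • (glMap α S : Matrix (Fin d) (Fin d) E) := by
      rw [glMap_val, glMap_val, hBval]
      ext i j
      simp [Matrix.map_apply]
    have h2 : ((A : Matrix (Fin d) (Fin d) E)) * (glMap α B : Matrix (Fin d) (Fin d) E)
        = α c • (((A : Matrix (Fin d) (Fin d) E)) * (glMap α S : Matrix (Fin d) (Fin d) E)) := by
      rw [h1, Matrix.mul_smul]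
    have h3 : (B * A : GL (Fin d) E).val = α c • (S * A : GL (Fin d) E).val := by
      rw [← hBtwist, ← hStwist]
      exact h2
    have h4 : (B * A : GL (Fin d) E).val = c • (S * A : GL (Fin d) E).val := by
      rw [Units.val_mul, Units.val_mul, hBval, Matrix.smul_mul]
    have h5 : (α c - c) • (S * A : GL (Fin d) E).val = 0 := by
      rw [sub_smul, ← h3, ← h4, sub_self]
    rcases smul_eq_zero.mp h5 with h | h
    · exact sub_eq_zero.mp h
    · exfalso
      have h1 : ((S * A : GL (Fin d) E) : Matrix (Fin d) (Fin d) E)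
          * (((S * A)⁻¹ : GL (Fin d) E) : Matrix (Fin d) (Fin d) E) = 1 :=
        (S * A).mul_inv
      rw [h, zero_mul] at h1
      have i0 : Fin d := ⟨0, hd⟩
      have h2 := congrFun (congrFun h1 i0) i0
      simp at h2
  -- c is fixed by the whole Galois group
  have hfix : ∀ β : E ≃ₐ[F] E, β c = c := by
    have hnat : ∀ n : ℕ, (α ^ n) c = c := by
      intro n
      induction n with
      | zero => rfl
      | succ n ih =>
        rw [pow_succ']
        show α ((α ^ n) c) = c
        rw [ih, hαc]
    intro β
    obtain ⟨n, rfl⟩ := hgen β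
    have h2 : ∀ k : ℕ, (α ^ (k : ℤ)) c = c := by
      intro k; rw [zpow_natCast]; exact hnat k
    rcases Int.eq_nat_or_neg n with ⟨k, rfl | rfl⟩
    · exact h2 k
    · apply (α ^ (k : ℤ)).injective
      have h3 : (α ^ (k : ℤ)) ((α ^ (-(k : ℤ))) c)
          = ((α ^ (k : ℤ)) * (α ^ (-(k : ℤ)))) c := rfl
      rw [h3, ← _root_.zpow_add]
      simp only [add_neg_cancel, zpow_zero, AlgEquiv.one_apply]
      exact (h2 k).symm
  -- hence c comes from F
  have hcF : c ∈ (⊥ : IntermediateField F E) := by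
    rw [← IsGalois.fixedField_fixingSubgroup (⊥ : IntermediateField F E),
      IntermediateField.fixingSubgroup_bot]
    intro g
    exact hfix g.1
  rw [IntermediateField.mem_bot] at hcF
  obtain ⟨μ, hμ⟩ := hcF
  -- c ≠ 0
  have hcne : c ≠ 0 := by
    intro h0
    rw [h0, zero_smul] at hBval
    have h1 : (B : Matrix (Fin d) (Fin d) E)
        * ((B⁻¹ : GL (Fin d) E) : Matrix (Fin d) (Fin d) E) = 1 := B.mul_inv
    rw [hBval, zero_mul] at h1
    have i0 : Fin d := ⟨0, hd⟩
    have h2 := congrFun (congrFun h1 i0) i0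
    simp at h2
  refine ⟨μ, ?_, ?_⟩
  · rintro rfl
    exact hcne (by rw [← hμ, map_zero])
  · -- identify the list product with B
    have hprodeq : ((List.range p).map fun i =>
        (A : Matrix (Fin d) (Fin d) E).map ⇑(α ^ i)).prod
          = (B : Matrix (Fin d) (Fin d) E) := by
      rw [hBdef, hBn]
      rw [show (((List.map m (List.range p)).prod : GL (Fin d) E) :
          Matrix (Fin d) (Fin d) E)
        = Units.coeHom (Matrix (Fin d) (Fin d) E) (List.map m (List.range p)).prod from rfl]
      rw [map_list_prod, List.map_map]
      rfl
    rw [hprodeq, hBval, hμ]
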